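/- Let k > 0 and define g : (0,∞)² → ℝ by g(λ₁, λ₂) = exp((k/2)·(log λ₁ − log λ₂)²). Then g is separately convex (i.e., for every fixed λ₂ > 0 the map λ₁ ↦ g(λ₁, λ₂) is convex on (0,∞), and for every fixed λ₁ > 0 the map λ₂ ↦ g(λ₁, λ₂) is convex on (0,∞)) if and only if k ≥ 1/4. -/

import Mathlib

open Real


lemma hd1 (k c x : ℝ) (hx : 0 < x) :
    HasDerivAt (fun y : ℝ => Real.exp (k / 2 * (Real.log y - c) ^ 2))
      (Real.exp (k / 2 * (Real.log x - c) ^ 2) * (k * (Real.log x - c) / x)) x := by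
  have h1 : HasDerivAt (fun y : ℝ => Real.log y - c) x⁻¹ x :=
    (Real.hasDerivAt_log hx.ne').sub_const c
  have h4 := ((h1.pow 2).const_mul (k / 2)).exp
  convert h4 using 1
  · rfl
  · simp only [Pi.pow_apply]
    norm_num
    field_simp

lemma hd2 (k c x : ℝ) (hx : 0 < x) :
    HasDerivAt (fun y : ℝ =>
        Real.exp (k / 2 * (Real.log y - c) ^ 2) * (k * (Real.log y - c) / y))
      (Real.exp (k / 2 * (Real.log x - c) ^ 2) *
        (k * (k * (Real.log x - c) ^ 2 - (Real.log x - c) + 1)) / x ^ 2) x := by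
  have h1 : HasDerivAt (fun y : ℝ => k * (Real.log y - c)) (k * x⁻¹) x :=
    ((Real.hasDerivAt_log hx.ne').sub_const c).const_mul k
  have h2 : HasDerivAt (fun y : ℝ => k * (Real.log y - c) / y)
      ((k * x⁻¹ * x - k * (Real.log x - c) * 1) / x ^ 2) x :=
    h1.div (hasDerivAt_id x) hx.ne'
  have h3 := (hd1 k c x hx).mul h2
  refine h3.congr_deriv ?_
  field_simp
  ring

lemma convex_main (k c : ℝ) (hk : 0 < k) (hk4 : 1 / 4 ≤ k) :
    ConvexOn ℝ (Set.Ioi (0 : ℝ))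
      (fun x : ℝ => Real.exp (k / 2 * (Real.log x - c) ^ 2)) := by
  have hint : interior (Set.Ioi (0 : ℝ)) = Set.Ioi 0 := interior_Ioi
  refine convexOn_of_hasDerivWithinAt2_nonneg (convex_Ioi 0)
    (f' := fun x => Real.exp (k / 2 * (Real.log x - c) ^ 2) * (k * (Real.log x - c) / x))
    (f'' := fun x => Real.exp (k / 2 * (Real.log x - c) ^ 2) *
      (k * (k * (Real.log x - c) ^ 2 - (Real.log x - c) + 1)) / x ^ 2)
    ?_ ?_ ?_ ?_
  · exact fun x hx => ((hd1 k c x hx).continuousAt).continuousWithinAt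
  · rw [hint]; exact fun x hx => (hd1 k c x hx).hasDerivWithinAt
  · rw [hint]; exact fun x hx => (hd2 k c x hx).hasDerivWithinAt
  · rw [hint]
    intro x hx
    set t := Real.log x - c
    have h1 : 0 ≤ k * (k * t ^ 2 - t + 1) := by nlinarith [sq_nonneg (2 * k * t - 1)]
    positivity

lemma deriv_nonneg_of_monotoneOn {g : ℝ → ℝ} {d x : ℝ} (hx : 0 < x)
    (hm : MonotoneOn g (Set.Ioi 0)) (hd : HasDerivAt g d x) : 0 ≤ d := by
  have ht : Filter.Tendsto (slope g x) (nhdsWithin x (Set.Ioi x)) (nhds d) :=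
    (hasDerivAt_iff_tendsto_slope.mp hd).mono_left
      (nhdsWithin_mono x (fun y hy => ne_of_gt hy))
  refine ge_of_tendsto ht ?_
  filter_upwards [self_mem_nhdsWithin] with y hy
  have hxy : x < y := hy
  have : g x ≤ g y := hm hx (hx.trans hxy) hxy.le
  have h2 : 0 < y - x := by linarith
  rw [slope_def_field]
  exact div_nonneg (by linarith) h2.le


/-- The planar isochoric exponentiated Hencky energy in terms of singular values,
`g(λ₁, λ₂) = exp((k/2)·(log λ₁ − log λ₂)²)`, is separately convex on `(0,∞)²`
if and only if `k ≥ 1/4`. -/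
theorem planar_g_separatelyConvex_iff (k : ℝ) (hk : 0 < k) :
    ((∀ l2 : ℝ, 0 < l2 →
        ConvexOn ℝ (Set.Ioi (0 : ℝ))
          (fun l1 : ℝ => Real.exp (k / 2 * (Real.log l1 - Real.log l2) ^ 2))) ∧
     (∀ l1 : ℝ, 0 < l1 →
        ConvexOn ℝ (Set.Ioi (0 : ℝ))
          (fun l2 : ℝ => Real.exp (k / 2 * (Real.log l1 - Real.log l2) ^ 2)))) ↔
    1 / 4 ≤ k := by
  constructor
  · rintro ⟨h1, -⟩
    by_contra hlt
    push_neg at hlt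
    have hconv := h1 1 one_pos
    have hconv' : ConvexOn ℝ (Set.Ioi (0 : ℝ))
        (fun l1 : ℝ => Real.exp (k / 2 * (Real.log l1 - 0) ^ 2)) := by
      simpa [Real.log_one] using hconv
    have hdiff : ∀ x ∈ Set.Ioi (0 : ℝ),
        DifferentiableAt ℝ (fun l1 : ℝ => Real.exp (k / 2 * (Real.log l1 - 0) ^ 2)) x :=
      fun x hx => (hd1 k 0 x hx).differentiableAt
    have hmono := hconv'.monotoneOn_deriv hdiff
    have hmono' : MonotoneOn
        (fun x : ℝ => Real.exp (k / 2 * (Real.log x - 0) ^ 2) * (k * (Real.log x - 0) / x))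
        (Set.Ioi 0) := by
      refine hmono.congr fun x hx => ?_
      exact (hd1 k 0 x hx).deriv
    set x₀ : ℝ := Real.exp (1 / (2 * k)) with hx₀def
    have hx₀ : 0 < x₀ := Real.exp_pos _
    have hd := hd2 k 0 x₀ hx₀
    have h0 := deriv_nonneg_of_monotoneOn hx₀ hmono' hd
    have ht : Real.log x₀ - 0 = 1 / (2 * k) := by
      rw [hx₀def, Real.log_exp]; ring
    rw [ht] at h0
    have hE : 0 < Real.exp (k / 2 * (1 / (2 * k)) ^ 2) := Real.exp_pos _
    have hx2 : 0 < x₀ ^ 2 := by positivity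
    have hQ : 0 ≤ k * (k * (1 / (2 * k)) ^ 2 - 1 / (2 * k) + 1) := by
      have := (div_nonneg_iff.mp h0)
      rcases this with ⟨hnum, -⟩ | ⟨hnum, hden⟩
      · nlinarith
      · nlinarith
    have : k * (k * (1 / (2 * k)) ^ 2 - 1 / (2 * k) + 1) = k - 1 / 4 := by
      field_simp
      ring
    rw [this] at hQ
    linarith
  · intro hk4
    constructor
    · intro l2 _
      exact convex_main k (Real.log l2) hk hk4
    · intro l1 _
      have heq : (fun l2 : ℝ => Real.exp (k / 2 * (Real.log l1 - Real.log l2) ^ 2)) =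
          fun l2 : ℝ => Real.exp (k / 2 * (Real.log l2 - Real.log l1) ^ 2) := by
        funext y
        congr 1
        ring
      rw [heq]
      exact convex_main k (Real.log l1) hk hk4
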